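/- Let a ∈ ℂ, let 0 < δ < ε/2, and let U ⊆ B(a, δ) be a simply connected domain. Let f : U → B(a, ε) be holomorphic and bijective. Then f has a fixed point ξ ∈ U which satisfies |f'(ξ)| ≥ ε/(4δ). -/

import Mathlib

open Metric Set Function Filter Topology


lemma key_normSq (r : ℝ) (p q : ℂ) :
    Complex.normSq (((r^2 : ℝ) : ℂ) - (starRingEnd ℂ) p * q) =
      r^2 * Complex.normSq (q - p) + (r^2 - Complex.normSq p) * (r^2 - Complex.normSq q) := by
  simp only [Complex.normSq_apply, Complex.sub_re, Complex.sub_im, Complex.mul_re, Complex.mul_im,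
    Complex.conj_re, Complex.conj_im, Complex.ofReal_re, Complex.ofReal_im]
  ring

/-- Non-centered Schwarz lemma: a holomorphic map of `ball c R` into `ball a r`
has `‖deriv g c‖ ≤ r / R`. -/
lemma schwarz_noncentered {g : ℂ → ℂ} {c a : ℂ} {R r : ℝ} (hR : 0 < R) (hr : 0 < r)
    (hd : DifferentiableOn ℂ g (ball c R))
    (hmaps : MapsTo g (ball c R) (ball a r)) :
    ‖deriv g c‖ ≤ r / R := by
  set b := g c with hbdef
  have hbmem : b ∈ ball a r := hmaps (mem_ball_self hR)
  set p : ℂ := b - a with hpdef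
  have hnp : Complex.normSq p < r ^ 2 := by
    have h1 : ‖p‖ < r := by
      rw [hpdef, ← Complex.dist_eq]; exact mem_ball.1 hbmem
    have := Complex.sq_norm p
    nlinarith [norm_nonneg p]
  set D : ℂ → ℂ := fun u => ((r^2 : ℝ) : ℂ) - (starRingEnd ℂ) p * (u - a) with hDdef
  have hDpos : ∀ u ∈ ball a r, r^2 * Complex.normSq (u - b) < Complex.normSq (D u) := by
    intro u hu
    have hq : Complex.normSq (u - a) < r ^ 2 := by
      have h1 : ‖u - a‖ < r := by rw [← Complex.dist_eq]; exact mem_ball.1 hu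
      have := Complex.sq_norm (u - a)
      nlinarith [norm_nonneg (u - a)]
    have hub : u - b = (u - a) - p := by rw [hpdef]; ring
    have := key_normSq r p (u - a)
    rw [hDdef]
    simp only []
    rw [this, hub]
    nlinarith [Complex.normSq_nonneg ((u - a) - p)]
  have hDne : ∀ u ∈ ball a r, D u ≠ 0 := by
    intro u hu h0
    have := hDpos u hu
    rw [h0, map_zero] at this
    nlinarith [Complex.normSq_nonneg (u - b)]
  set m : ℂ → ℂ := fun u => ((r^2 : ℝ) : ℂ) * (u - b) / D u with hmdef
  have hmmem : ∀ u ∈ ball a r, m u ∈ ball (0 : ℂ) r := by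
    intro u hu
    rw [mem_ball_zero_iff]
    have hDu : 0 < ‖D u‖ := norm_pos_iff.mpr (hDne u hu)
    have h2 : r * ‖u - b‖ < ‖D u‖ := by
      have h3 := hDpos u hu
      have e1 : (r * ‖u - b‖)^2 = r^2 * Complex.normSq (u - b) := by
        rw [mul_pow, Complex.sq_norm]
      have e2 : (‖D u‖)^2 = Complex.normSq (D u) := Complex.sq_norm _
      have : (r * ‖u - b‖)^2 < (‖D u‖)^2 := by rw [e1, e2]; exact h3
      exact lt_of_pow_lt_pow_left₀ 2 hDu.le this
    have : ‖m u‖ = r^2 * ‖u - b‖ / ‖D u‖ := by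
      rw [hmdef]
      simp only []
      rw [norm_div, norm_mul, Complex.norm_real, Real.norm_eq_abs, abs_of_nonneg (sq_nonneg r)]
    rw [this, div_lt_iff₀ hDu]
    calc r^2 * ‖u - b‖ = r * (r * ‖u - b‖) := by ring
    _ < r * ‖D u‖ := by
        apply mul_lt_mul_of_pos_left h2 hr
  have hmb : m b = 0 := by simp [hmdef]
  set φ : ℂ → ℂ := fun w => m (g w) with hφdef
  have hφd : DifferentiableOn ℂ φ (ball c R) := by
    intro w hw
    have hgw : g w ∈ ball a r := hmaps hw
    have hmd : DifferentiableAt ℂ m (g w) := by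
      apply DifferentiableAt.div
      · exact (differentiableAt_id.sub_const b).const_mul _
      · exact (differentiableAt_const _).sub ((differentiableAt_id.sub_const a).const_mul _)
      · exact hDne _ hgw
    exact hmd.comp_differentiableWithinAt w (hd w hw)
  have hφc : φ c = 0 := by rw [hφdef]; simp only []; rw [← hbdef, hmb]
  have hφmaps : MapsTo φ (ball c R) (ball (φ c) r) := by
    rw [hφc]
    exact fun w hw => hmmem (g w) (hmaps hw)
  have hSch : ‖deriv φ c‖ ≤ r / R := Complex.norm_deriv_le_div_of_mapsTo_ball hφd (hφmaps.mono_right ball_subset_closedBall) hR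
  -- compute deriv φ c
  have hgc : HasDerivAt g (deriv g c) c :=
    (hd.differentiableAt (isOpen_ball.mem_nhds (mem_ball_self hR))).hasDerivAt
  have hN : HasDerivAt (fun u => ((r^2 : ℝ) : ℂ) * (u - b)) (((r^2 : ℝ) : ℂ) * 1) b :=
    ((hasDerivAt_id b).sub_const b).const_mul (((r^2 : ℝ) : ℂ))
  rw [mul_one] at hN
  have hDd : HasDerivAt D (-(starRingEnd ℂ) p) b := by
    simpa using (((hasDerivAt_id b).sub_const a).const_mul ((starRingEnd ℂ) p)).const_sub (((r^2 : ℝ) : ℂ))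
  have hmder : HasDerivAt m (((r^2 : ℝ) : ℂ) / D b) b := by
    have h := hN.div hDd (hDne b hbmem)
    refine h.congr_deriv ?_
    rw [sub_self, mul_zero, zero_mul, sub_zero, pow_two (D b), mul_div_mul_right _ _ (hDne b hbmem)]
  have hφder : HasDerivAt φ (((r^2 : ℝ) : ℂ) / D b * deriv g c) c := by
    exact HasDerivAt.comp c (hbdef ▸ hmder) hgc
  have hone : (1 : ℝ) ≤ ‖((r^2 : ℝ) : ℂ) / D b‖ := by
    have hDb : D b = ((r^2 - Complex.normSq p : ℝ) : ℂ) := by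
      rw [hDdef]
      simp only []
      rw [← hpdef]
      rw [show (starRingEnd ℂ) p * (b - a) = (starRingEnd ℂ) p * p by rw [← hpdef]]
      rw [mul_comm, Complex.mul_conj]
      push_cast
      ring
    rw [hDb, norm_div]
    rw [Complex.norm_real, Complex.norm_real]
    rw [Real.norm_eq_abs, Real.norm_eq_abs, abs_of_nonneg (sq_nonneg r),
      abs_of_nonneg (by nlinarith [Complex.normSq_nonneg p] : (0:ℝ) ≤ r^2 - Complex.normSq p)]
    rw [le_div_iff₀ (by nlinarith : (0:ℝ) < r^2 - Complex.normSq p), one_mul]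
    nlinarith [Complex.normSq_nonneg p]
  calc ‖deriv g c‖ ≤ ‖((r^2 : ℝ) : ℂ) / D b‖ * ‖deriv g c‖ := by
        nlinarith [norm_nonneg (deriv g c)]
  _ = ‖deriv φ c‖ := by rw [hφder.deriv, norm_mul]
  _ ≤ r / R := hSch
theorem fixed_point_of_univalent_island
    (a : ℂ) (δ ε : ℝ) (hδ : 0 < δ) (hδε : δ < ε / 2)
    (U : Set ℂ) (hU : IsOpen U) (hUconn : IsConnected U)
    (hUsc : SimplyConnectedSpace U) (hUsub : U ⊆ Metric.ball a δ)
    (f : ℂ → ℂ) (hf : DifferentiableOn ℂ f U)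
    (hbij : Set.BijOn f U (Metric.ball a ε)) :
    ∃ ξ ∈ U, f ξ = ξ ∧ ε / (4 * δ) ≤ ‖deriv f ξ‖ := by
  have hε : 0 < ε := by linarith
  have hεδ : δ < ε := by linarith
  set g : ℂ → ℂ := Function.invFunOn f U with hgdef
  have hinv : Set.InvOn g f U (ball a ε) := hbij.invOn_invFunOn
  have hleft : ∀ z ∈ U, g (f z) = z := fun z hz => hinv.1 hz
  have hright : ∀ w ∈ ball a ε, f (g w) = w := fun w hw => hinv.2 hw
  have hgmem : ∀ w ∈ ball a ε, g w ∈ U := by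
    intro w hw
    obtain ⟨z, hz, hfz⟩ := hbij.surjOn hw
    exact Function.invFunOn_mem ⟨z, hz, hfz⟩
  have hfa : AnalyticOnNhd ℂ f U := hf.analyticOnNhd hU
  -- f is an open map on subsets of U
  have hopen : ∀ s ⊆ U, IsOpen s → IsOpen (f '' s) := by
    rcases hfa.is_constant_or_isOpen hUconn.isPreconnected with ⟨v, hv⟩ | h
    · exfalso
      have h1 : a ∈ ball a ε := mem_ball_self hε
      have h2 : a + ((ε/2 : ℝ) : ℂ) ∈ ball a ε := by
        rw [mem_ball, dist_eq_norm]
        simp only [add_sub_cancel_left]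
        rw [Complex.norm_real, Real.norm_eq_abs, abs_of_pos (by linarith)]
        linarith
      obtain ⟨z₁, hz₁, hfz₁⟩ := hbij.surjOn h1
      obtain ⟨z₂, hz₂, hfz₂⟩ := hbij.surjOn h2
      have : a = a + ((ε/2 : ℝ) : ℂ) := by
        have h3 : f z₁ = f z₂ := (hv z₁ hz₁).trans (hv z₂ hz₂).symm
        rw [hfz₁, hfz₂] at h3
        exact h3
      have h0 : ((ε/2 : ℝ) : ℂ) = 0 := by linear_combination -this
      rw [Complex.ofReal_eq_zero] at h0
      linarith
    · exact h
  -- g is continuous on the ball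
  have hgcont : ∀ w ∈ ball a ε, ContinuousAt g w := by
    intro w hw
    rw [ContinuousAt, Filter.tendsto_def]
    intro V hV
    have hzU : g w ∈ U := hgmem w hw
    have himg : IsOpen (f '' (interior V ∩ U)) :=
      hopen _ Set.inter_subset_right (isOpen_interior.inter hU)
    have hmem : w ∈ f '' (interior V ∩ U) :=
      ⟨g w, ⟨mem_interior_iff_mem_nhds.2 hV, hzU⟩, hright w hw⟩
    refine Filter.mem_of_superset (himg.mem_nhds hmem) ?_
    rintro _ ⟨x, ⟨hxV, hxU⟩, rfl⟩
    show g (f x) ∈ V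
    rw [hleft x hxU]
    exact interior_subset hxV
  -- g is differentiable wherever `deriv f` does not vanish
  have hgood : ∀ w ∈ ball a ε, deriv f (g w) ≠ 0 → DifferentiableAt ℂ g w := by
    intro w hw hne
    have hzU : g w ∈ U := hgmem w hw
    have hfz : HasStrictDerivAt f (deriv f (g w)) (g w) :=
      ((hfa _ hzU).contDiffAt (n := 1)).hasStrictDerivAt one_ne_zero
    have hev : ∀ᶠ x in 𝓝 (g w), g (f x) = x :=
      Filter.eventually_of_mem (hU.mem_nhds hzU) (fun x hx => hleft x hx)
    have hgs : HasStrictDerivAt g (deriv f (g w))⁻¹ (f (g w)) :=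
      hfz.to_local_left_inverse hne hev
    rw [hright w hw] at hgs
    exact hgs.hasDerivAt.differentiableAt
  -- g is differentiable everywhere on the ball
  have hgdiff : ∀ w ∈ ball a ε, DifferentiableAt ℂ g w := by
    intro w hw
    by_cases hne : deriv f (g w) ≠ 0
    · exact hgood w hw hne
    push_neg at hne
    have hzU : g w ∈ U := hgmem w hw
    have hfzw : f (g w) = w := hright w hw
    have hda : AnalyticAt ℂ (deriv f) (g w) := hfa.deriv (g w) hzU
    have hiso : ∀ᶠ x in 𝓝[≠] (g w), deriv f x ≠ 0 := by
      rcases hda.eventually_eq_zero_or_eventually_ne_zero with h | h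
      · exfalso
        have hUev : ∀ᶠ x in 𝓝 (g w), x ∈ U := hU.mem_nhds hzU
        have hmem : ∀ᶠ x in 𝓝 (g w), deriv f x = 0 ∧ x ∈ U := h.and hUev
        rcases Metric.eventually_nhds_iff.1 hmem with ⟨τ, hτ0, hτ⟩
        -- f is constant on ball (g w) τ
        have hconst : ∀ x ∈ ball (g w) τ, f x = f (g w) := by
          have hd : ∀ x ∈ ball (g w) τ, DifferentiableAt ℂ f x := fun x hx =>
            hf.differentiableAt (hU.mem_nhds (hτ (mem_ball.1 hx)).2)
          have hb : ∀ x ∈ ball (g w) τ, ‖fderiv ℂ f x‖ ≤ 0 := by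
            intro x hx
            have h1 : HasFDerivAt f (ContinuousLinearMap.smulRight (1 : ℂ →L[ℂ] ℂ) (deriv f x)) x :=
              (hd x hx).hasDerivAt.hasFDerivAt
            rw [h1.fderiv, (hτ (mem_ball.1 hx)).1]
            simp
          intro x hx
          have := (convex_ball (g w) τ).norm_image_sub_le_of_norm_fderiv_le hd hb
            (mem_ball_self hτ0) hx
          rw [zero_mul] at this
          have h2 : f x - f (g w) = 0 := by
            have := norm_le_zero_iff.1 this
            exact this
          linear_combination h2
        have h2 : g w + ((τ/2 : ℝ) : ℂ) ∈ ball (g w) τ := by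
          rw [mem_ball, dist_eq_norm]
          simp only [add_sub_cancel_left]
          rw [Complex.norm_real, Real.norm_eq_abs, abs_of_pos (by linarith)]
          linarith
        have h3 : g w + ((τ/2 : ℝ) : ℂ) = g w :=
          hbij.injOn (hτ (mem_ball.1 h2)).2 hzU (by rw [hconst _ h2])
        have h4 : ((τ/2 : ℝ) : ℂ) = 0 := by linear_combination h3
        rw [Complex.ofReal_eq_zero] at h4
        linarith
      · exact h
    have hUev : ∀ᶠ x in 𝓝 (g w), x ∈ U := hU.mem_nhds hzU
    have hT : ∀ᶠ x in 𝓝 (g w), (x ∈ ({g w}ᶜ : Set ℂ) → deriv f x ≠ 0) ∧ x ∈ U :=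
      (eventually_nhdsWithin_iff.1 hiso).and hUev
    rcases Metric.eventually_nhds_iff.1 hT with ⟨τ, hτ0, hτ⟩
    have hc := hgcont w hw
    have hρmem : g ⁻¹' (ball (g w) τ) ∩ ball a ε ∈ 𝓝 w :=
      Filter.inter_mem (hc (ball_mem_nhds _ hτ0)) (isOpen_ball.mem_nhds hw)
    rcases Metric.mem_nhds_iff.1 hρmem with ⟨ρ, hρ0, hρ⟩
    have hA : AnalyticAt ℂ g w := by
      apply Complex.analyticAt_of_differentiable_on_punctured_nhds_of_continuousAt _ hc
      rw [eventually_nhdsWithin_iff]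
      refine Filter.eventually_of_mem (ball_mem_nhds w hρ0) ?_
      intro x hx hxw
      have hx1 : g x ∈ ball (g w) τ := (hρ hx).1
      have hx2 : x ∈ ball a ε := (hρ hx).2
      have hgxz : g x ≠ g w := by
        intro hgz
        apply hxw
        show x = w
        rw [← hright x hx2, hgz, hfzw]
      have hder : deriv f (g x) ≠ 0 := (hτ (mem_ball.1 hx1)).1 (by simpa using hgxz)
      exact hgood x hx2 hder
    exact hA.differentiableAt
  -- derivative bound via the Schwarz lemma
  set k : ℝ := δ / (ε - δ) with hkdef
  have hεδ0 : (0:ℝ) < ε - δ := by linarith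
  have hk1 : k < 1 := (div_lt_one hεδ0).2 (by linarith)
  have hk0 : 0 < k := div_pos hδ hεδ0
  have hsub : ∀ x ∈ closedBall a δ, ball x (ε - δ) ⊆ ball a ε := by
    intro x hx y hy
    rw [mem_ball] at *
    rw [mem_closedBall] at hx
    calc dist y a ≤ dist y x + dist x a := dist_triangle _ _ _
    _ < (ε - δ) + δ := by apply add_lt_add_of_lt_of_le hy hx
    _ = ε := by ring
  have hderiv_bound : ∀ x ∈ closedBall a δ, ‖deriv g x‖ ≤ k := by
    intro x hx
    exact schwarz_noncentered (g := g) (c := x) (a := a) hεδ0 hδ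
      (fun y hy => (hgdiff y (hsub x hx hy)).differentiableWithinAt)
      (fun y hy => hUsub (hgmem y (hsub x hx hy)))
  -- Lipschitz on the closed ball
  have hcb : closedBall a δ ⊆ ball a ε := closedBall_subset_ball hεδ
  have hlip : ∀ x ∈ closedBall a δ, ∀ y ∈ closedBall a δ, ‖g y - g x‖ ≤ k * ‖y - x‖ := by
    intro x hx y hy
    refine (convex_closedBall a δ).norm_image_sub_le_of_norm_fderiv_le
      (fun u hu => hgdiff u (hcb hu)) ?_ hx hy
    intro u hu
    have h1 : HasFDerivAt g (ContinuousLinearMap.smulRight (1 : ℂ →L[ℂ] ℂ) (deriv g u)) u :=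
      (hgdiff u (hcb hu)).hasDerivAt.hasFDerivAt
    rw [h1.fderiv, ContinuousLinearMap.norm_smulRight_apply]
    have : ‖(1 : ℂ →L[ℂ] ℂ)‖ = 1 := by
      rw [ContinuousLinearMap.one_def, ContinuousLinearMap.norm_id]
    rw [this, one_mul]
    exact hderiv_bound u hu
  -- Banach fixed point
  have hSmaps : Set.MapsTo g (closedBall a δ) (closedBall a δ) := fun x hx =>
    ball_subset_closedBall (hUsub (hgmem x (hcb hx)))
  have hK0 : (0:ℝ) ≤ k := hk0.le
  have hcontr : ContractingWith ⟨k, hK0⟩ (hSmaps.restrict g _ _) := by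
    constructor
    · exact_mod_cast hk1
    · apply LipschitzWith.of_dist_le_mul
      intro x y
      simp only [Set.MapsTo.val_restrict_apply, Subtype.dist_eq, dist_eq_norm, NNReal.coe_mk]
      exact hlip y.1 y.2 x.1 x.2
  obtain ⟨ξ, hξS, hfix, -, -⟩ := hcontr.exists_fixedPoint'
    isClosed_closedBall.isComplete hSmaps (mem_closedBall_self hδ.le) (edist_ne_top _ _)
  have hξball : ξ ∈ ball a ε := hcb hξS
  have hξU : ξ ∈ U := by
    have := hgmem ξ hξball
    rwa [hfix] at this
  have hfξ : f ξ = ξ := by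
    have := hright ξ hξball
    rwa [hfix] at this
  -- chain rule at ξ
  have hfd : HasDerivAt f (deriv f ξ) ξ := (hf.differentiableAt (hU.mem_nhds hξU)).hasDerivAt
  have hgd : HasDerivAt g (deriv g ξ) (f ξ) := by
    rw [hfξ]; exact (hgdiff ξ hξball).hasDerivAt
  have hcomp : HasDerivAt (g ∘ f) (deriv g ξ * deriv f ξ) ξ := hgd.comp ξ hfd
  have heq : (g ∘ f) =ᶠ[𝓝 ξ] id :=
    Filter.eventually_of_mem (hU.mem_nhds hξU) (fun x hx => hleft x hx)
  have hid : deriv g ξ * deriv f ξ = 1 :=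
    (hcomp.congr_of_eventuallyEq heq.symm).unique (hasDerivAt_id ξ)
  have hgb : ‖deriv g ξ‖ ≤ k := hderiv_bound ξ hξS
  have hgpos : 0 < ‖deriv g ξ‖ := by
    rw [norm_pos_iff]
    intro h0
    rw [h0, zero_mul] at hid
    exact one_ne_zero hid.symm
  refine ⟨ξ, hξU, hfξ, ?_⟩
  have habs : ‖deriv g ξ‖ * ‖deriv f ξ‖ = 1 := by
    rw [← norm_mul, hid, norm_one]
  have h4δ : (0:ℝ) < 4 * δ := by linarith
  rw [div_le_iff₀ h4δ]
  have hB0 : 0 ≤ ‖deriv f ξ‖ := norm_nonneg _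
  have h5 : ‖deriv g ξ‖ * (ε - δ) ≤ δ := by
    rw [hkdef] at hgb
    rw [← le_div_iff₀ hεδ0]
    simpa using hgb
  have h6 : ‖deriv f ξ‖ * (‖deriv g ξ‖ * (ε - δ))
      ≤ ‖deriv f ξ‖ * δ := mul_le_mul_of_nonneg_left h5 hB0
  have h8 : ‖deriv f ξ‖ * (‖deriv g ξ‖ * (ε - δ))
      = (‖deriv g ξ‖ * ‖deriv f ξ‖) * (ε - δ) := by ring
  rw [h8, habs, one_mul] at h6
  linarith
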